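/- arXiv:1306.1593 — 7 statements merged into one kernel-verified Lean document; each statement's English description precedes it below -/
import Mathlib

section
/- In the poset P of intervals [i,j] with 1 ≤ i ≤ j ≤ n ordered by inclusion, if an interval [i,j] with j - i = a belongs to an antichain of cardinality b, then b ≤ n - a. -/
/-- In the poset of intervals `[i,j] ⊆ [1,n]` ordered by inclusion, if an
interval `[i,j]` with `j - i = a` belongs to an antichain of cardinality `b`, then
`b ≤ n - a`. -/
theorem stmt_2 (n i j a b : ℕ) (h1 : 1 ≤ i) (h2 : i ≤ j) (h3 : j ≤ n) (ha : j - i = a)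
    (A : Finset (ℕ × ℕ))
    (hsub : ∀ p ∈ A, 1 ≤ p.1 ∧ p.1 ≤ p.2 ∧ p.2 ≤ n)
    (hanti : ∀ p ∈ A, ∀ q ∈ A, p ≠ q → ¬(q.1 ≤ p.1 ∧ p.2 ≤ q.2))
    (hmem : (i, j) ∈ A) (hb : A.card = b) :
    b ≤ n - a := by
  subst hb ha
  have key : ∀ p ∈ A, i ≤ p.1 → j ≤ p.2 := by
    intro p hp hpi
    by_cases hpq : p = (i, j)
    · subst hpq; exact le_refl j
    · have h := hanti p hp (i, j) hmem hpq
      simp only at h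
      omega
  have hmaps : ∀ p ∈ A,
      (if p.1 < i then p.1 else p.2 - (j - i)) ∈ Finset.Icc 1 (n - (j - i)) := by
    intro p hp
    have hs := hsub p hp
    have hk := key p hp
    simp only [Finset.mem_Icc]
    split_ifs with hc <;> omega
  have hinj : Set.InjOn (fun p : ℕ × ℕ => if p.1 < i then p.1 else p.2 - (j - i)) A := by
    intro p hp q hq hfe
    by_contra hne
    have hA := hanti p hp q hq hne
    have hB := hanti q hq p hp (Ne.symm hne)
    have hsp := hsub p hp
    have hsq := hsub q hq
    have hkp := key p hp
    have hkq := key q hq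
    have hne' : p.1 ≠ q.1 ∨ p.2 ≠ q.2 := by
      by_contra hcon
      push_neg at hcon
      exact hne (Prod.ext hcon.1 hcon.2)
    simp only at hfe
    split_ifs at hfe <;> omega
  have := Finset.card_le_card_of_injOn _ hmaps hinj
  simpa using this
end

section
/- In the poset P of intervals [i,j] ⊆ [1,n] ordered by inclusion, no interval [i,j] with j - i ≥ 2 belongs to an antichain of cardinality n-1, provided n ≥ 3. -/
/-- In the poset of intervals `[i,j] ⊆ [1,n]` ordered by inclusion, no interval
`[i,j]` with `j - i ≥ 2` belongs to an antichain of cardinality `n-1`, provided `n ≥ 3`. -/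
theorem stmt_3 (n i j : ℕ) (hn : 3 ≤ n) (h1 : 1 ≤ i) (h2 : i ≤ j) (h3 : j ≤ n)
    (hji : 2 ≤ j - i)
    (A : Finset (ℕ × ℕ))
    (hsub : ∀ p ∈ A, 1 ≤ p.1 ∧ p.1 ≤ p.2 ∧ p.2 ≤ n)
    (hanti : ∀ p ∈ A, ∀ q ∈ A, p ≠ q → ¬(q.1 ≤ p.1 ∧ p.2 ≤ q.2))
    (hcard : A.card = n - 1) :
    (i, j) ∉ A := by
  intro hmem
  set L := A.filter (fun p => p.1 < i) with hL
  set R := A.filter (fun p => i < p.1) with hR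
  -- every element of A is (i,j) or in L or R
  have hcover : A ⊆ insert (i, j) (L ∪ R) := by
    intro p hp
    rcases lt_trichotomy p.1 i with h | h | h
    · exact Finset.mem_insert_of_mem (Finset.mem_union_left _ (Finset.mem_filter.2 ⟨hp, h⟩))
    · -- p.1 = i forces p = (i,j): otherwise comparable
      have : p = (i, j) := by
        by_contra hne
        rcases le_total p.2 j with hle | hle
        · exact hanti p hp (i, j) hmem hne ⟨h.ge, hle⟩
        · exact hanti (i, j) hmem p hp (Ne.symm hne) ⟨h.le, hle⟩
      simp [this]
    · exact Finset.mem_insert_of_mem (Finset.mem_union_right _ (Finset.mem_filter.2 ⟨hp, h⟩))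
  -- bound |L| ≤ i - 1 via left endpoints
  have hLcard : L.card ≤ i - 1 := by
    have := Finset.card_le_card_of_injOn (f := Prod.fst) (s := L) (t := Finset.Ico 1 i)
      (by
        intro p hp
        have hp' := Finset.mem_filter.1 hp
        exact Finset.mem_Ico.2 ⟨(hsub p hp'.1).1, hp'.2⟩)
      (by
        intro p hp q hq hfst
        have hp' := Finset.mem_filter.1 hp
        have hq' := Finset.mem_filter.1 hq
        by_contra hne
        rcases le_total p.2 q.2 with hle | hle
        · exact hanti p hp'.1 q hq'.1 hne ⟨hfst.ge, hle⟩
        · exact hanti q hq'.1 p hp'.1 (Ne.symm hne) ⟨hfst.le, hle⟩)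
    simpa using this
  -- bound |R| ≤ n - j via right endpoints
  have hRcard : R.card ≤ n - j := by
    have := Finset.card_le_card_of_injOn (f := Prod.snd) (s := R) (t := Finset.Ico (j+1) (n+1))
      (by
        intro p hp
        have hp' := Finset.mem_filter.1 hp
        have hne : p ≠ (i, j) := by
          intro h; rw [h] at hp'; exact lt_irrefl i hp'.2
        have h2j : j < p.2 := by
          by_contra hle
          exact hanti p hp'.1 (i, j) hmem hne ⟨hp'.2.le, not_lt.1 hle⟩
        exact Finset.mem_Ico.2 ⟨h2j, Nat.lt_succ_of_le (hsub p hp'.1).2.2⟩)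
      (by
        intro p hp q hq hsnd
        have hp' := Finset.mem_filter.1 hp
        have hq' := Finset.mem_filter.1 hq
        by_contra hne
        rcases le_total p.1 q.1 with hle | hle
        · exact hanti q hq'.1 p hp'.1 (Ne.symm hne) ⟨hle, hsnd.ge⟩
        · exact hanti p hp'.1 q hq'.1 hne ⟨hle, hsnd.le⟩)
    simpa [Nat.add_sub_add_right] using this
  have hAcard : A.card ≤ 1 + (L.card + R.card) := by
    calc A.card ≤ (insert (i, j) (L ∪ R)).card := Finset.card_le_card hcover
      _ ≤ (L ∪ R).card + 1 := Finset.card_insert_le _ _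
      _ ≤ (L.card + R.card) + 1 := by
          exact Nat.add_le_add_right (Finset.card_union_le _ _) 1
      _ = 1 + (L.card + R.card) := by ring
  omega
end

section
/- In the poset P of intervals [i,j] ⊆ [1,n] ordered by inclusion (n ≥ 3), the set {[k,k+1] : 1 ≤ k ≤ n-1} is the unique maximal (n-1)-antichain: every antichain of cardinality n-1 is contained in the order ideal generated by this set. -/
/-- In the poset of intervals `[i,j] ⊆ [1,n]` ordered by inclusion (`n ≥ 3`),
the set `{[k,k+1] : 1 ≤ k ≤ n-1}` is the unique maximal `(n-1)`-antichain: it is an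
antichain of cardinality `n-1`, and every antichain of cardinality `n-1` is contained in
the order ideal it generates. -/
theorem stmt_4 (n : ℕ) (hn : 3 ≤ n)
    (X : Finset (ℕ × ℕ)) (hX : X = (Finset.Icc 1 (n - 1)).image (fun k => (k, k + 1))) :
    ((∀ p ∈ X, ∀ q ∈ X, p ≠ q → ¬(q.1 ≤ p.1 ∧ p.2 ≤ q.2)) ∧ X.card = n - 1) ∧
    (∀ A : Finset (ℕ × ℕ),
      (∀ p ∈ A, 1 ≤ p.1 ∧ p.1 ≤ p.2 ∧ p.2 ≤ n) →
      (∀ p ∈ A, ∀ q ∈ A, p ≠ q → ¬(q.1 ≤ p.1 ∧ p.2 ≤ q.2)) →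
      A.card = n - 1 →
      ∀ p ∈ A, ∃ q ∈ X, q.1 ≤ p.1 ∧ p.2 ≤ q.2) := by
  subst hX
  constructor
  · constructor
    · intro p hp q hq hne
      simp only [Finset.mem_image, Finset.mem_Icc] at hp hq
      obtain ⟨k, hk, rfl⟩ := hp
      obtain ⟨l, hl, rfl⟩ := hq
      rintro ⟨h1, h2⟩
      exact hne (by simp; omega)
    · rw [Finset.card_image_of_injective _ (fun a b h => by simpa using congrArg Prod.fst h)]
      rw [Nat.card_Icc]
      omega
  · intro A hbound hanti hcard p hp
    obtain ⟨ha1, hab, hbn⟩ := hbound p hp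
    by_cases hlen : p.2 ≤ p.1 + 1
    · by_cases hpa : p.1 ≤ n - 1
      · exact ⟨(p.1, p.1 + 1),
          Finset.mem_image.mpr ⟨p.1, Finset.mem_Icc.mpr ⟨ha1, hpa⟩, rfl⟩, le_refl _, hlen⟩
      · refine ⟨(n - 1, n), Finset.mem_image.mpr ⟨n - 1, Finset.mem_Icc.mpr ⟨by omega, le_refl _⟩,
          by simp [Prod.ext_iff]; omega⟩, by omega, by omega⟩
    · exfalso
      push_neg at hlen
      set S1 := (A.erase p).filter (fun q => q.1 < p.1) with hS1
      set S2 := (A.erase p).filter (fun q => p.1 < q.1) with hS2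
      have hsub : A.erase p ⊆ S1 ∪ S2 := by
        intro q hq
        have hqA : q ∈ A := Finset.mem_of_mem_erase hq
        have hne : q ≠ p := Finset.ne_of_mem_erase hq
        have h1 := hanti p hp q hqA (Ne.symm hne)
        have h2 := hanti q hqA p hp hne
        have hne1 : q.1 ≠ p.1 := by
          intro h
          rcases le_total p.2 q.2 with h' | h'
          · exact h1 ⟨le_of_eq h, h'⟩
          · exact h2 ⟨le_of_eq h.symm, h'⟩
        simp only [hS1, hS2, Finset.mem_union, Finset.mem_filter]
        rcases lt_or_gt_of_ne hne1 with h | h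
        · exact Or.inl ⟨hq, h⟩
        · exact Or.inr ⟨hq, h⟩
      have hc1 : S1.card ≤ p.1 - 1 := by
        have := Finset.card_le_card_of_injOn (fun q => q.1)
          (fun q hq => by
            simp only [hS1, Finset.mem_coe, Finset.mem_filter] at hq
            obtain ⟨hq1, hq2⟩ := hq
            have := hbound q (Finset.mem_of_mem_erase hq1)
            show q.1 ∈ Finset.Icc 1 (p.1 - 1)
            rw [Finset.mem_Icc]
            omega)
          (fun q hq q' hq' heq => by
            simp only [hS1, Finset.mem_coe, Finset.mem_filter] at hq hq'
            by_contra hne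
            have h1 := hanti q (Finset.mem_of_mem_erase hq.1) q'
              (Finset.mem_of_mem_erase hq'.1) hne
            have h2 := hanti q' (Finset.mem_of_mem_erase hq'.1) q
              (Finset.mem_of_mem_erase hq.1) (Ne.symm hne)
            simp only at heq
            have : q.2 = q'.2 := by omega
            exact hne (Prod.ext heq this)) (s := S1) (t := Finset.Icc 1 (p.1 - 1))
        rw [Nat.card_Icc] at this
        omega
      have hc2 : S2.card ≤ n - p.2 := by
        have hgt : ∀ q ∈ S2, p.2 < q.2 := by
          intro q hq
          simp only [hS2, Finset.mem_filter] at hq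
          have h := hanti q (Finset.mem_of_mem_erase hq.1) p hp (Finset.ne_of_mem_erase hq.1)
          omega
        have := Finset.card_le_card_of_injOn (fun q => q.2)
          (fun q hq => by
            have h1 := hgt q hq
            simp only [hS2, Finset.mem_coe, Finset.mem_filter] at hq
            have := hbound q (Finset.mem_of_mem_erase hq.1)
            show q.2 ∈ Finset.Icc (p.2 + 1) n
            rw [Finset.mem_Icc]
            omega)
          (fun q hq q' hq' heq => by
            simp only [hS2, Finset.mem_coe, Finset.mem_filter] at hq hq'
            by_contra hne
            have h1 := hanti q (Finset.mem_of_mem_erase hq.1) q'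
              (Finset.mem_of_mem_erase hq'.1) hne
            have h2 := hanti q' (Finset.mem_of_mem_erase hq'.1) q
              (Finset.mem_of_mem_erase hq.1) (Ne.symm hne)
            simp only at heq
            have : q.1 = q'.1 := by omega
            exact hne (Prod.ext this heq)) (s := S2) (t := Finset.Icc (p.2 + 1) n)
        rw [Nat.card_Icc] at this
        omega
      have hce : (A.erase p).card = n - 2 := by
        rw [Finset.card_erase_of_mem hp, hcard]
        omega
      have := (Finset.card_le_card hsub).trans (Finset.card_union_le S1 S2)
      omega
end

section
/- Let P be the poset of intervals [i,j] with 1 ≤ i ≤ j ≤ 2n-1 and i+j ≤ 2n, ordered by inclusion. If an interval [i,j] with j - i = a belongs to an antichain of cardinality b in P, then b ≤ n - ⌈a/2⌉. -/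
/-- Let `P` be the poset of intervals `[i,j]` with `1 ≤ i ≤ j ≤ 2n-1` and
`i + j ≤ 2n`, ordered by inclusion.  If an interval `[i,j]` with `j - i = a` belongs to an
antichain of cardinality `b` in `P`, then `b ≤ n - ⌈a/2⌉`.  (In ℕ, `⌈a/2⌉ = (a+1)/2`.) -/
theorem stmt_6 (n i j a b : ℕ) (hn : 2 ≤ n)
    (h1 : 1 ≤ i) (h2 : i ≤ j) (h3 : j ≤ 2 * n - 1) (h4 : i + j ≤ 2 * n) (ha : j - i = a)
    (A : Finset (ℕ × ℕ))
    (hsub : ∀ p ∈ A, 1 ≤ p.1 ∧ p.1 ≤ p.2 ∧ p.2 ≤ 2 * n - 1 ∧ p.1 + p.2 ≤ 2 * n)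
    (hanti : ∀ p ∈ A, ∀ q ∈ A, p ≠ q → ¬(q.1 ≤ p.1 ∧ p.2 ≤ q.2))
    (hmem : (i, j) ∈ A) (hb : A.card = b) :
    b ≤ n - (a + 1) / 2 := by
  classical
  subst hb
  -- if left endpoints agree, the intervals agree
  have inj1 : ∀ p ∈ A, ∀ q ∈ A, p.1 = q.1 → p = q := by
    intro p hp q hq he
    by_contra hne
    rcases le_total p.2 q.2 with h | h
    · exact hanti p hp q hq hne ⟨he.ge, h⟩
    · exact hanti q hq p hp (Ne.symm hne) ⟨he.le, h⟩
  -- smaller left endpoint forces smaller right endpoint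
  have key : ∀ p ∈ A, ∀ q ∈ A, p.1 < q.1 → p.2 < q.2 := by
    intro p hp q hq hlt
    by_contra h
    push_neg at h
    refine hanti q hq p hp ?_ ⟨le_of_lt hlt, h⟩
    intro he; rw [he] at hlt; exact lt_irrefl _ hlt
  have hfix : ∀ p ∈ A, p.1 = i → p = (i, j) := by
    intro p hp he
    exact inj1 p hp (i, j) hmem he
  set L := A.filter (fun p => p.1 < i) with hLdef
  set R := A.filter (fun p => i < p.1) with hRdef
  -- bound on L
  have hLcard : L.card ≤ i - 1 := by
    have h := Finset.card_le_card_of_injOn (fun p => p.1)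
      (s := L) (t := Finset.Icc 1 (i - 1)) ?_ ?_
    · simpa [Nat.card_Icc] using h
    · intro p hp
      rw [hLdef, Finset.mem_coe, Finset.mem_filter] at hp
      have := hsub p hp.1
      simp only [Finset.mem_coe, Finset.mem_Icc]
      omega
    · intro p hp q hq he
      replace hp := Finset.mem_filter.mp (Finset.mem_coe.mp hp)
      replace hq := Finset.mem_filter.mp (Finset.mem_coe.mp hq)
      exact inj1 p hp.1 q hq.1 he
  -- elements of R lie strictly to the right of (i,j)
  have hRj : ∀ p ∈ R, i < p.1 ∧ j < p.2 := by
    intro p hp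
    rw [hRdef, Finset.mem_filter] at hp
    refine ⟨hp.2, ?_⟩
    by_contra h
    push_neg at h
    refine hanti p hp.1 (i, j) hmem ?_ ⟨le_of_lt hp.2, h⟩
    intro he; rw [he] at hp; exact lt_irrefl _ hp.2
  -- bound on R via rounded midpoints
  have hRcard : R.card ≤ n + 1 - (i + (a + 1) / 2 + 1) := by
    have h := Finset.card_le_card_of_injOn (fun p => (p.1 + p.2 + 1) / 2)
      (s := R) (t := Finset.Icc (i + (a + 1) / 2 + 1) n) ?_ ?_
    · simpa [Nat.card_Icc] using h
    · intro p hp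
      have h1' := hRj p hp
      rw [hRdef, Finset.mem_coe, Finset.mem_filter] at hp
      have h2' := hsub p hp.1
      simp only [Finset.mem_coe, Finset.mem_Icc]
      omega
    · intro p hp q hq he
      replace hp := Finset.mem_filter.mp (Finset.mem_coe.mp hp)
      replace hq := Finset.mem_filter.mp (Finset.mem_coe.mp hq)
      rcases lt_trichotomy p.1 q.1 with h | h | h
      · have := key p hp.1 q hq.1 h
        simp only at he
        omega
      · exact inj1 p hp.1 q hq.1 h
      · have := key q hq.1 p hp.1 h
        simp only at he
        omega
  -- split A
  have hsplit : A ⊆ L ∪ R ∪ {(i, j)} := by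
    intro p hp
    rcases lt_trichotomy p.1 i with h | h | h
    · exact Finset.mem_union_left _ (Finset.mem_union_left _
        (Finset.mem_filter.mpr ⟨hp, h⟩))
    · exact Finset.mem_union_right _ (by simp [hfix p hp h])
    · exact Finset.mem_union_left _ (Finset.mem_union_right _
        (Finset.mem_filter.mpr ⟨hp, h⟩))
  have hcard : A.card ≤ L.card + R.card + 1 := by
    calc A.card ≤ (L ∪ R ∪ {(i, j)}).card := Finset.card_le_card hsplit
      _ ≤ (L ∪ R).card + ({(i, j)} : Finset (ℕ × ℕ)).card := Finset.card_union_le _ _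
      _ ≤ L.card + R.card + 1 := by
          have := Finset.card_union_le L R
          simp only [Finset.card_singleton]
          omega
  omega
end

section
/- Let P be the poset of intervals [i,j] with 1 ≤ i ≤ j ≤ 2n-1 and i+j ≤ 2n, ordered by inclusion, where n ≥ 3. Then no interval [i,j] with j-i ≥ 3 belongs to an antichain of cardinality n-1, and consequently {[k,k+2] : 1 ≤ k ≤ n-1} is the unique maximal (n-1)-antichain of P. -/
/-- Let `P` be the poset of intervals `[i,j]` with `1 ≤ i ≤ j ≤ 2n-1` and
`i + j ≤ 2n`, ordered by inclusion, where `n ≥ 3`.  Then no interval `[i,j]` with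
`j - i ≥ 3` belongs to an antichain of cardinality `n-1`, and consequently
`{[k,k+2] : 1 ≤ k ≤ n-1}` is the unique maximal `(n-1)`-antichain of `P`: every antichain
of cardinality `n-1` is contained in the order ideal it generates. -/
theorem stmt_7 (n : ℕ) (hn : 3 ≤ n)
    (X : Finset (ℕ × ℕ)) (hX : X = (Finset.Icc 1 (n - 1)).image (fun k => (k, k + 2))) :
    (∀ A : Finset (ℕ × ℕ),
      (∀ p ∈ A, 1 ≤ p.1 ∧ p.1 ≤ p.2 ∧ p.2 ≤ 2 * n - 1 ∧ p.1 + p.2 ≤ 2 * n) →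
      (∀ p ∈ A, ∀ q ∈ A, p ≠ q → ¬(q.1 ≤ p.1 ∧ p.2 ≤ q.2)) →
      A.card = n - 1 →
      (∀ p ∈ A, p.2 - p.1 < 3) ∧ (∀ p ∈ A, ∃ q ∈ X, q.1 ≤ p.1 ∧ p.2 ≤ q.2)) := by
  subst hX
  intro A hmem hanti hcard
  have hcont : ∀ q ∈ A, ∀ r ∈ A, r.1 ≤ q.1 → q.2 ≤ r.2 → q = r := by
    intro q hq r hr h1 h2
    by_contra hne
    exact hanti q hq r hr hne ⟨h1, h2⟩
  have hfst : ∀ q ∈ A, ∀ r ∈ A, q.1 = r.1 → q = r := by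
    intro q hq r hr h
    rcases le_total q.2 r.2 with h2 | h2
    · exact hcont q hq r hr h.ge h2
    · exact (hcont r hr q hq h.le h2).symm
  have hmono : ∀ q ∈ A, ∀ r ∈ A, q.1 < r.1 → q.2 < r.2 := by
    intro q hq r hr h
    by_contra hle
    push_neg at hle
    have heq := hcont r hr q hq (le_of_lt h) hle
    exact lt_irrefl _ (heq ▸ h)
  have key : ∀ p ∈ A, p.2 ≤ p.1 + 2 := by
    intro p hp
    set L := A.filter (fun q => q.1 < p.1) with hLdef
    set R := A.filter (fun q => p.1 < q.1) with hRdef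
    have hpm := hmem p hp
    -- split
    have hdisj : Disjoint L R := by
      rw [Finset.disjoint_left]
      intro q hq1 hq2
      simp only [hLdef, hRdef, Finset.mem_filter] at hq1 hq2
      omega
    have hunion : L ∪ R = A.erase p := by
      ext q
      simp only [hLdef, hRdef, Finset.mem_union, Finset.mem_filter, Finset.mem_erase]
      constructor
      · rintro (⟨hq, h⟩ | ⟨hq, h⟩) <;>
          exact ⟨fun he => by subst he; omega, hq⟩
      · rintro ⟨hne, hq⟩
        rcases lt_trichotomy q.1 p.1 with h | h | h
        · exact Or.inl ⟨hq, h⟩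
        · exact absurd (hfst q hq p hp h) hne
        · exact Or.inr ⟨hq, h⟩
    have hsplit : A.card = L.card + R.card + 1 := by
      have h1 : (L ∪ R).card = L.card + R.card := Finset.card_union_of_disjoint hdisj
      have h2 : (A.erase p).card + 1 = A.card := Finset.card_erase_add_one hp
      rw [hunion] at h1
      omega
    -- bound on L
    have hLcard : L.card ≤ p.1 - 1 := by
      have : L.card ≤ (Finset.Icc 1 (p.1 - 1)).card := by
        apply Finset.card_le_card_of_injOn Prod.fst
        · intro q hq
          simp only [hLdef, Finset.mem_coe, Finset.mem_filter] at hq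
          have := hmem q hq.1
          simp only [Finset.mem_coe, Finset.mem_Icc]
          omega
        · intro q hq r hr h
          simp only [hLdef, Finset.coe_filter, Set.mem_setOf_eq] at hq hr
          exact hfst q hq.1 r hr.1 h
      simpa [Nat.card_Icc] using this
    -- bound on R
    have hRcard : p.1 + p.2 + 2 * R.card ≤ 2 * n := by
      rcases R.eq_empty_or_nonempty with hRe | hRne
      · simp [hRe]; omega
      · obtain ⟨q, hqR, hqmax⟩ := R.exists_max_image Prod.fst hRne
        have hqA : q ∈ A := (Finset.mem_filter.mp hqR).1
        have hq1 : p.1 < q.1 := (Finset.mem_filter.mp hqR).2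
        have hqm := hmem q hqA
        have hR1 : R.card ≤ (Finset.Icc (p.1 + 1) q.1).card := by
          apply Finset.card_le_card_of_injOn Prod.fst
          · intro r hr
            simp only [hRdef, Finset.mem_coe, Finset.mem_filter] at hr
            have := hqmax r (by simpa [hRdef, Finset.mem_filter] using hr)
            simp only [Finset.mem_coe, Finset.mem_Icc]
            omega
          · intro r hr s hs h
            simp only [hRdef, Finset.coe_filter, Set.mem_setOf_eq] at hr hs
            exact hfst r hr.1 s hs.1 h
        have hR2 : R.card ≤ (Finset.Icc (p.2 + 1) q.2).card := by
          apply Finset.card_le_card_of_injOn Prod.snd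
          · intro r hr
            simp only [hRdef, Finset.mem_coe, Finset.mem_filter] at hr
            have h1 : p.2 < r.2 := hmono p hp r hr.1 hr.2
            have h2 : r.2 ≤ q.2 := by
              rcases eq_or_ne r q with rfl | hne
              · exact le_refl _
              · have hlt : r.1 < q.1 := by
                  have hle := hqmax r (by simpa [hRdef, Finset.mem_filter] using hr)
                  rcases lt_or_eq_of_le hle with h | h
                  · exact h
                  · exact absurd (hfst r hr.1 q hqA h) hne
                exact le_of_lt (hmono r hr.1 q hqA hlt)
            simp only [Finset.mem_coe, Finset.mem_Icc]
            omega
          · intro r hr s hs h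
            simp only [hRdef, Finset.coe_filter, Set.mem_setOf_eq] at hr hs
            rcases le_total r.1 s.1 with h1 | h1
            · exact (hcont s hs.1 r hr.1 h1 h.ge).symm
            · exact hcont r hr.1 s hs.1 h1 h.le
        simp only [Nat.card_Icc] at hR1 hR2
        omega
    omega
  refine ⟨fun p hp => by have := key p hp; have := hmem p hp; omega, fun p hp => ?_⟩
  have hk := key p hp
  have hpm := hmem p hp
  refine ⟨(max 1 (p.2 - 2), max 1 (p.2 - 2) + 2), ?_, ?_, ?_⟩
  · simp only [Finset.mem_image, Finset.mem_Icc]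
    exact ⟨max 1 (p.2 - 2), ⟨by omega, by omega⟩, rfl⟩
  · simp only
    omega
  · simp only
    omega
end

section
/- In the poset P of intervals [i,j] ⊆ [1,n] ordered by inclusion, the set X[i,j] of elements comparable to a fixed [i,j], together with the n - (j-i) - 1 chains L[s, s+(j-i)] for 1 ≤ s < i and R[s, s+(j-i)] for i < s ≤ n-(j-i), covers all of P. -/
/-- In the poset of intervals `[u,v] ⊆ [1,n]` ordered by inclusion, the set
`X[i,j]` of elements comparable to a fixed `[i,j]`, together with the chains `L[s,s+a]`
for `1 ≤ s < i` and `R[s,s+a]` for `i < s ≤ n-a` (where `a = j-i`), covers all of `P`.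
Here `L[s,s+a] = {[s,t] : s ≤ t ≤ s+a} ∪ {[r,s+a] : 1 ≤ r ≤ s}` and
`R[s,s+a] = {[s,t] : s+a ≤ t ≤ n} ∪ {[r,s+a] : s ≤ r ≤ s+a}`. -/
theorem stmt_13 (n i j : ℕ) (h1 : 1 ≤ i) (h2 : i ≤ j) (h3 : j ≤ n) :
    ∀ u v : ℕ, 1 ≤ u → u ≤ v → v ≤ n →
      -- (u,v) is comparable with (i,j)
      ((i ≤ u ∧ v ≤ j) ∨ (u ≤ i ∧ j ≤ v)) ∨
      -- (u,v) lies in some chain L[s, s+(j-i)] with 1 ≤ s < i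
      (∃ s, 1 ≤ s ∧ s < i ∧
        ((u = s ∧ s ≤ v ∧ v ≤ s + (j - i)) ∨ (1 ≤ u ∧ u ≤ s ∧ v = s + (j - i)))) ∨
      -- (u,v) lies in some chain R[s, s+(j-i)] with i < s ≤ n-(j-i)
      (∃ s, i < s ∧ s ≤ n - (j - i) ∧
        ((u = s ∧ s + (j - i) ≤ v ∧ v ≤ n) ∨ (s ≤ u ∧ u ≤ s + (j - i) ∧ v = s + (j - i)))) := by
  intro u v hu huv hv
  rcases le_or_gt i u with hiu | hiu
  · rcases le_or_gt v j with hvj | hvj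
    · exact Or.inl (Or.inl ⟨hiu, hvj⟩)
    · rcases eq_or_lt_of_le hiu with rfl | hiu'
      · exact Or.inl (Or.inr ⟨le_refl _, le_of_lt hvj⟩)
      · right; right
        rcases le_or_gt (u + (j - i)) v with h | h
        · exact ⟨u, hiu', by omega, Or.inl ⟨rfl, by omega, hv⟩⟩
        · exact ⟨v - (j - i), by omega, by omega, Or.inr ⟨by omega, by omega, by omega⟩⟩
  · rcases le_or_gt j v with hjv | hjv
    · exact Or.inl (Or.inr ⟨le_of_lt hiu, hjv⟩)
    · right; left
      rcases le_or_gt v (u + (j - i)) with h | h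
      · exact ⟨u, hu, hiu, Or.inl ⟨rfl, huv, h⟩⟩
      · exact ⟨v - (j - i), by omega, by omega, Or.inr ⟨hu, by omega, by omega⟩⟩
end

section
/- The root poset of type F_4 possesses an order ideal I (the ideal generated by the set of roots of height 4) admitting a nontrivial poset automorphism of order 2, while the full root poset of F_4 admits no nontrivial automorphism. -/
/-- The 24 positive roots of type `F_4`, given by their coefficient vectors with respect to
the four simple roots; the partial order is the coordinatewise one, i.e. `x ≤ y` iff
`y - x` is a nonnegative combination of simple roots. -/
def F4PosRoots : Set (Fin 4 → ℕ) :=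
  {![1,0,0,0], ![0,1,0,0], ![0,0,1,0], ![0,0,0,1],
   ![1,1,0,0], ![0,1,1,0], ![0,0,1,1],
   ![1,1,1,0], ![0,1,2,0], ![0,1,1,1],
   ![1,1,2,0], ![1,1,1,1], ![0,1,2,1],
   ![1,2,2,0], ![1,1,2,1], ![0,1,2,2],
   ![1,2,2,1], ![1,1,2,2],
   ![1,2,3,1], ![1,2,2,2],
   ![1,2,3,2],
   ![1,2,4,2],
   ![1,3,4,2],
   ![2,3,4,2]}

/-- The order ideal of the `F_4` root poset generated by the roots of height `4`
(coefficient sum `5`). -/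
def F4Ideal : Set (Fin 4 → ℕ) :=
  {x ∈ F4PosRoots | ∃ a ∈ F4PosRoots, a 0 + a 1 + a 2 + a 3 = 5 ∧ x ≤ a}

namespace F4Aux

/-- The roots as a list. -/
def L : List (Fin 4 → ℕ) :=
  [![1,0,0,0], ![0,1,0,0], ![0,0,1,0], ![0,0,0,1],
   ![1,1,0,0], ![0,1,1,0], ![0,0,1,1],
   ![1,1,1,0], ![0,1,2,0], ![0,1,1,1],
   ![1,1,2,0], ![1,1,1,1], ![0,1,2,1],
   ![1,2,2,0], ![1,1,2,1], ![0,1,2,2],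
   ![1,2,2,1], ![1,1,2,2],
   ![1,2,3,1], ![1,2,2,2],
   ![1,2,3,2],
   ![1,2,4,2],
   ![1,3,4,2],
   ![2,3,4,2]]

/-- The ideal as a list. -/
def IL : List (Fin 4 → ℕ) :=
  [![1,0,0,0], ![0,1,0,0], ![0,0,1,0], ![0,0,0,1],
   ![1,1,0,0], ![0,1,1,0], ![0,0,1,1],
   ![1,1,1,0], ![0,1,2,0], ![0,1,1,1],
   ![1,1,2,0], ![1,1,1,1], ![0,1,2,1],
   ![1,2,2,0], ![1,1,2,1], ![0,1,2,2]]

instance decLe : DecidableRel ((· ≤ ·) : (Fin 4 → ℕ) → (Fin 4 → ℕ) → Prop) :=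
  fun x y => decidable_of_iff (∀ i, x i ≤ y i) (Pi.le_def).symm

lemma mem_roots (x : Fin 4 → ℕ) : x ∈ F4PosRoots ↔ x ∈ L := by
  simp [F4PosRoots, L]

instance : DecidablePred (· ∈ F4PosRoots) := fun x => decidable_of_iff _ (mem_roots x).symm

instance : Fintype ↥F4PosRoots :=
  Fintype.subtype L.toFinset (fun x => by rw [List.mem_toFinset]; exact (mem_roots x).symm)

lemma mem_ideal (x : Fin 4 → ℕ) : x ∈ F4Ideal ↔ x ∈ IL := by
  have h : x ∈ F4Ideal ↔ (x ∈ L ∧ ∃ a ∈ L, a 0 + a 1 + a 2 + a 3 = 5 ∧ x ≤ a) := by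
    simp only [F4Ideal, Set.mem_setOf_eq, mem_roots]
  rw [h]
  constructor
  · rintro ⟨hx, hex⟩
    fin_cases hx <;> revert hex <;> decide
  · intro hx
    fin_cases hx <;> decide

instance : DecidablePred (· ∈ F4Ideal) := fun x => decidable_of_iff _ (mem_ideal x).symm

instance : Fintype ↥F4Ideal :=
  Fintype.subtype IL.toFinset (fun x => by rw [List.mem_toFinset]; exact (mem_ideal x).symm)

instance : DecidableRel ((· ≤ ·) : ↥F4PosRoots → ↥F4PosRoots → Prop) :=
  fun a b => decidable_of_iff _ Subtype.coe_le_coe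

/-- The nontrivial automorphism of the ideal. -/
def f : (Fin 4 → ℕ) → (Fin 4 → ℕ) := fun x =>
  if x = ![1,0,0,0] then ![0,0,0,1] else
  if x = ![0,0,0,1] then ![1,0,0,0] else
  if x = ![0,1,0,0] then ![0,0,1,0] else
  if x = ![0,0,1,0] then ![0,1,0,0] else
  if x = ![1,1,0,0] then ![0,0,1,1] else
  if x = ![0,0,1,1] then ![1,1,0,0] else
  if x = ![1,1,1,0] then ![0,1,1,1] else
  if x = ![0,1,1,1] then ![1,1,1,0] else
  if x = ![1,1,2,0] then ![0,1,2,1] else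
  if x = ![0,1,2,1] then ![1,1,2,0] else
  if x = ![1,2,2,0] then ![0,1,2,2] else
  if x = ![0,1,2,2] then ![1,2,2,0] else
  x

lemma hmaps : ∀ x : ↥F4Ideal, f x.1 ∈ IL := by decide

lemma hinvol : ∀ x : ↥F4Ideal, f (f x.1) = x.1 := by decide

lemma hiff : ∀ x y : ↥F4Ideal, (f x.1 ≤ f y.1 ↔ x.1 ≤ y.1) := by decide

def φ : F4Ideal ≃o F4Ideal :=
  ⟨⟨fun x => ⟨f x.1, (mem_ideal _).mpr (hmaps x)⟩,
    fun x => ⟨f x.1, (mem_ideal _).mpr (hmaps x)⟩,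
    fun x => Subtype.ext (hinvol x),
    fun x => Subtype.ext (hinvol x)⟩,
   @fun a b => Iff.trans Subtype.mk_le_mk ((hiff a b).trans Subtype.coe_le_coe)⟩

-- invariants
def dd (x : Fin 4 → ℕ) : ℕ := L.countP (fun y => decide (y ≤ x))
def uu (x : Fin 4 → ℕ) : ℕ := L.countP (fun y => decide (x ≤ y))
def su (x : Fin 4 → ℕ) : ℕ := ((L.filter (fun y => decide (x ≤ y))).map uu).sum
def sd (x : Fin 4 → ℕ) : ℕ := ((L.filter (fun y => decide (y ≤ x))).map dd).sum
def N (x : Fin 4 → ℕ) : ℕ × ℕ × ℕ × ℕ := (dd x, uu x, su x, sd x)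

def g : (Fin 4 → ℕ) → ℕ × ℕ × ℕ × ℕ := fun x =>
  if x = ![1,0,0,0] then (1,15,113,1) else
  if x = ![0,1,0,0] then (1,20,181,1) else
  if x = ![0,0,1,0] then (1,20,181,1) else
  if x = ![0,0,0,1] then (1,15,112,1) else
  if x = ![1,1,0,0] then (3,14,98,5) else
  if x = ![0,1,1,0] then (3,18,147,5) else
  if x = ![0,0,1,1] then (3,14,97,5) else
  if x = ![1,1,1,0] then (6,13,84,15) else
  if x = ![0,1,2,0] then (4,14,93,9) else
  if x = ![0,1,1,1] then (6,13,83,15) else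
  if x = ![1,1,2,0] then (8,11,61,27) else
  if x = ![1,1,1,1] then (10,10,52,35) else
  if x = ![0,1,2,1] then (8,11,60,27) else
  if x = ![1,2,2,0] then (9,8,35,36) else
  if x = ![1,1,2,1] then (14,9,42,69) else
  if x = ![0,1,2,2] then (9,7,28,36) else
  if x = ![1,2,2,1] then (16,7,27,94) else
  if x = ![1,1,2,2] then (16,6,21,94) else
  if x = ![1,2,3,1] then (17,5,15,111) else
  if x = ![1,2,2,2] then (19,5,15,138) else
  if x = ![1,2,3,2] then (21,4,10,176) else
  if x = ![1,2,4,2] then (22,3,6,198) else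
  if x = ![1,3,4,2] then (23,2,3,221) else
  (24,1,1,245)

lemma hNg : ∀ x : ↥F4PosRoots, N x.1 = g x.1 := by decide

lemma hg : ∀ x y : ↥F4PosRoots, g x.1 = g y.1 →
    x = y ∨ (x.1 = ![0,1,0,0] ∧ y.1 = ![0,0,1,0]) ∨ (x.1 = ![0,0,1,0] ∧ y.1 = ![0,1,0,0]) := by
  decide

lemma hdd : ∀ x : ↥F4PosRoots, dd x.1 = Fintype.card {y : ↥F4PosRoots // y ≤ x} := by decide
lemma huu : ∀ x : ↥F4PosRoots, uu x.1 = Fintype.card {y : ↥F4PosRoots // x ≤ y} := by decide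
lemma hsu : ∀ x : ↥F4PosRoots, su x.1 = ∑ y : {y : ↥F4PosRoots // x ≤ y}, uu y.1.1 := by decide
lemma hsd : ∀ x : ↥F4PosRoots, sd x.1 = ∑ y : {y : ↥F4PosRoots // y ≤ x}, dd y.1.1 := by decide

section Psi
variable (ψ : F4PosRoots ≃o F4PosRoots)

def eIic (x : ↥F4PosRoots) : {y : ↥F4PosRoots // y ≤ x} ≃ {y : ↥F4PosRoots // y ≤ ψ x} where
  toFun y := ⟨ψ y.1, ψ.le_iff_le.mpr y.2⟩
  invFun y := ⟨ψ.symm y.1, by simpa using ψ.symm.le_iff_le.mpr y.2⟩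
  left_inv y := Subtype.ext (by simp)
  right_inv y := Subtype.ext (by simp)

def eIci (x : ↥F4PosRoots) : {y : ↥F4PosRoots // x ≤ y} ≃ {y : ↥F4PosRoots // ψ x ≤ y} where
  toFun y := ⟨ψ y.1, ψ.le_iff_le.mpr y.2⟩
  invFun y := ⟨ψ.symm y.1, by simpa using ψ.symm.le_iff_le.mpr y.2⟩
  left_inv y := Subtype.ext (by simp)
  right_inv y := Subtype.ext (by simp)

lemma dd_psi (x : ↥F4PosRoots) : dd (ψ x).1 = dd x.1 := by
  rw [hdd, hdd]
  exact (Fintype.card_congr (eIic ψ x)).symm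

lemma uu_psi (x : ↥F4PosRoots) : uu (ψ x).1 = uu x.1 := by
  rw [huu, huu]
  exact (Fintype.card_congr (eIci ψ x)).symm

lemma su_psi (x : ↥F4PosRoots) : su (ψ x).1 = su x.1 := by
  rw [hsu, hsu]
  exact (Fintype.sum_equiv (eIci ψ x) (fun y => uu y.1.1) (fun y => uu y.1.1)
    (fun y => (uu_psi ψ y.1).symm)).symm

lemma sd_psi (x : ↥F4PosRoots) : sd (ψ x).1 = sd x.1 := by
  rw [hsd, hsd]
  exact (Fintype.sum_equiv (eIic ψ x) (fun y => dd y.1.1) (fun y => dd y.1.1)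
    (fun y => (dd_psi ψ y.1).symm)).symm

lemma N_psi (x : ↥F4PosRoots) : N (ψ x).1 = N x.1 := by
  simp [N, dd_psi, uu_psi, su_psi, sd_psi]

end Psi

end F4Aux

open F4Aux in
/-- The root poset of type `F_4` possesses an order ideal `I` (the ideal
generated by the roots of height `4`) admitting a nontrivial poset automorphism of order
`2`, while the full root poset of `F_4` admits no nontrivial automorphism. -/
theorem stmt_19 :
    (∃ φ : F4Ideal ≃o F4Ideal, φ ≠ OrderIso.refl F4Ideal ∧
      φ.trans φ = OrderIso.refl F4Ideal) ∧
    (∀ ψ : F4PosRoots ≃o F4PosRoots, ψ = OrderIso.refl F4PosRoots) := by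
  constructor
  · refine ⟨φ, ?_, ?_⟩
    · intro h
      have h1 := congrArg (fun e : F4Ideal ≃o F4Ideal =>
        (e ⟨![1,0,0,0], (mem_ideal _).mpr (by decide)⟩).1) h
      exact absurd h1 (by decide)
    · ext x i
      exact congrFun (congrArg Subtype.val (Subtype.ext (hinvol x) :
        (φ.trans φ) x = x)) i
  · intro ψ
    have hgψ : ∀ x : ↥F4PosRoots, g (ψ x).1 = g x.1 := fun x => by
      rw [← hNg, ← hNg, N_psi]
    have hfix : ∀ x : ↥F4PosRoots, x.1 ≠ ![0,1,0,0] → x.1 ≠ ![0,0,1,0] → ψ x = x := by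
      intro x h2 h3
      rcases hg (ψ x) x (hgψ x) with h | ⟨_, hb⟩ | ⟨_, hb⟩
      exacts [h, absurd hb h3, absurd hb h2]
    set a2 : ↥F4PosRoots := ⟨![0,1,0,0], (mem_roots _).mpr (by decide)⟩ with ha2def
    set a3 : ↥F4PosRoots := ⟨![0,0,1,0], (mem_roots _).mpr (by decide)⟩ with ha3def
    set b : ↥F4PosRoots := ⟨![1,1,0,0], (mem_roots _).mpr (by decide)⟩ with hbdef
    have hb : ψ b = b := hfix b (by decide) (by decide)
    have ha2 : ψ a2 = a2 := by
      rcases hg (ψ a2) a2 (hgψ a2) with h | ⟨_, hb'⟩ | ⟨ha', _⟩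
      · exact h
      · exact absurd hb' (by decide)
      · exfalso
        have hle : ψ a2 ≤ ψ b := ψ.le_iff_le.mpr (Subtype.mk_le_mk.mpr (by decide))
        rw [hb] at hle
        have h2 : (ψ a2).1 ≤ b.1 := Subtype.coe_le_coe.mpr hle
        rw [ha'] at h2
        exact absurd h2 (by decide)
    have ha3 : ψ a3 = a3 := by
      rcases hg (ψ a3) a3 (hgψ a3) with h | ⟨ha', _⟩ | ⟨_, hb'⟩
      · exact h
      · exfalso
        have : ψ a3 = ψ a2 := by rw [ha2]; exact Subtype.ext ha'
        have := ψ.injective this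
        exact absurd (congrArg Subtype.val this) (by decide)
      · exact absurd hb' (by decide)
    have key : ∀ x : ↥F4PosRoots, ψ x = x := by
      intro x
      by_cases h2 : x.1 = ![0,1,0,0]
      · rw [show x = a2 from Subtype.ext h2]; exact ha2
      by_cases h3 : x.1 = ![0,0,1,0]
      · rw [show x = a3 from Subtype.ext h3]; exact ha3
      exact hfix x h2 h3
    ext x i
    exact congrFun (congrArg Subtype.val (key x)) i
end
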